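/- With $h(d)$ as the optimal cost of the single-customer transportation LP (capacities $K_i \ge 0$, costs $0 \le c_i < p$), and $g(d) = \max_{i^* \in \{0, \dots, n\}} \big( c_{i^*} d + \sum_{i : c_i < c_{i^*}} K_i (c_i - c_{i^*}) \big)$ with $c_0 := p$: the greedy primal value and the max-form dual value coincide, i.e., $h(d) = g(d)$ for all $d \ge 0$. -/

import Mathlib

open Finset

/-- Lower bound: every dual term is below every feasible cost. -/
lemma stmt18_lb {n : ℕ} (c Kc : Fin n → ℝ) (p t : ℝ) (x : Fin n → ℝ) (s : ℝ)
    (ht : t ≤ p) (hx : ∀ i, 0 ≤ x i ∧ x i ≤ Kc i) (hs : 0 ≤ s) :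
    t * ((∑ i, x i) + s) + ∑ i ∈ univ.filter (fun i => c i < t), Kc i * (c i - t)
      ≤ ∑ i, c i * x i + p * s := by
  rw [Finset.sum_filter, mul_add, Finset.mul_sum]
  have key : ∀ i ∈ (univ : Finset (Fin n)),
      t * x i + (if c i < t then Kc i * (c i - t) else 0) ≤ c i * x i := by
    intro i _
    obtain ⟨h0, h1⟩ := hx i
    split_ifs with h
    · nlinarith
    · push_neg at h; nlinarith
  have hsum := Finset.sum_le_sum key
  rw [Finset.sum_add_distrib] at hsum
  have := mul_le_mul_of_nonneg_right ht hs
  linarith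

/-- Greedy existence: a feasible point whose cost is below some dual term. -/
lemma stmt18_greedy {n : ℕ} (c Kc : Fin n → ℝ) (p : ℝ) (hp : ∀ i, c i < p)
    (hK : ∀ i, 0 ≤ Kc i) (s : Finset (Fin n)) :
    ∀ d : ℝ, 0 ≤ d →
    ∃ (x : Fin n → ℝ) (sl t : ℝ),
      (∑ i ∈ s, x i) + sl = d ∧ (∀ i ∈ s, 0 ≤ x i ∧ x i ≤ Kc i) ∧ 0 ≤ sl ∧
      (t = p ∨ ∃ i ∈ s, t = c i) ∧
      ∑ i ∈ s, c i * x i + p * sl ≤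
        t * d + ∑ i ∈ s.filter (fun i => c i < t), Kc i * (c i - t) := by
  induction s using Finset.strongInduction with
  | _ s ih =>
  intro d hd
  rcases s.eq_empty_or_nonempty with rfl | hs
  · exact ⟨0, d, p, by simp, by simp, hd, Or.inl rfl, by simp⟩
  · obtain ⟨j, hj, hjmin⟩ := s.exists_min_image c hs
    by_cases hcase : d ≤ Kc j
    · refine ⟨fun i => if i = j then d else 0, 0, c j, ?_, ?_, le_rfl, Or.inr ⟨j, hj, rfl⟩, ?_⟩
      · rw [Finset.sum_ite_eq' s j (fun _ => d), if_pos hj]; ring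
      · intro i hi
        dsimp only
        split_ifs with h
        · exact ⟨hd, h ▸ hcase⟩
        · exact ⟨le_rfl, hK i⟩
      · have hfe : s.filter (fun i => c i < c j) = ∅ := by
          rw [Finset.filter_eq_empty_iff]
          intro i hi
          exact not_lt.2 (hjmin i hi)
        rw [hfe]
        have h1 : (∑ i ∈ s, c i * if i = j then d else 0)
            = ∑ i ∈ s, (if i = j then c j * d else 0) := by
          apply Finset.sum_congr rfl
          intro i _
          split_ifs with h
          · rw [h]
          · ring
        rw [h1, Finset.sum_ite_eq' s j (fun _ => c j * d), if_pos hj]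
        simp
    · push_neg at hcase
      obtain ⟨x', sl, t, h1, h2, h3, h4, h5⟩ :=
        ih (s.erase j) (Finset.erase_ssubset hj) (d - Kc j) (by linarith [hK j])
      have hupd : ∀ (f : Fin n → ℝ → ℝ),
          ∑ i ∈ s, f i (Function.update x' j (Kc j) i)
            = f j (Kc j) + ∑ i ∈ s.erase j, f i (x' i) := by
        intro f
        rw [← Finset.add_sum_erase s _ hj, Function.update_self]
        congr 1
        apply Finset.sum_congr rfl
        intro i hi
        rw [Function.update_of_ne (Finset.ne_of_mem_erase hi)]
      have htp : t ≤ p := by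
        rcases h4 with rfl | ⟨i, _, rfl⟩
        · exact le_rfl
        · exact (hp i).le
      have hcjt : c j ≤ t := by
        rcases h4 with rfl | ⟨i, hi, rfl⟩
        · exact (hp j).le
        · exact hjmin i (Finset.mem_of_mem_erase hi)
      refine ⟨Function.update x' j (Kc j), sl, t, ?_, ?_, h3, ?_, ?_⟩
      · have := hupd (fun _ v => v)
        rw [this]; linarith
      · intro i hi
        rcases eq_or_ne i j with rfl | hne
        · rw [Function.update_self]; exact ⟨hK i, le_rfl⟩
        · rw [Function.update_of_ne hne]
          exact h2 i (Finset.mem_erase.2 ⟨hne, hi⟩)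
      · rcases h4 with rfl | ⟨i, hi, rfl⟩
        · exact Or.inl rfl
        · exact Or.inr ⟨i, Finset.mem_of_mem_erase hi, rfl⟩
      · have hc1 := hupd (fun i v => c i * v)
        rw [hc1]
        -- filter sum over s vs over erase
        have hfil : ∑ i ∈ s.filter (fun i => c i < t), Kc i * (c i - t)
            = (if c j < t then Kc j * (c j - t) else 0)
              + ∑ i ∈ (s.erase j).filter (fun i => c i < t), Kc i * (c i - t) := by
          rw [Finset.sum_filter, Finset.sum_filter, ← Finset.add_sum_erase s _ hj]
        rw [hfil]
        have hK0 : Kc j * (c j - t) ≤ (if c j < t then Kc j * (c j - t) else 0) := by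
          split_ifs with h
          · exact le_rfl
          · push_neg at h
            have : c j = t := le_antisymm hcjt h
            rw [this]; ring_nf; exact le_rfl
        nlinarith [h5, hK0]

theorem stmt18 (n : ℕ) (c : Fin n → ℝ) (p : ℝ) (Kc : Fin n → ℝ) (d : ℝ)
    (hc : ∀ i, 0 ≤ c i) (hp : ∀ i, c i < p) (hK : ∀ i, 0 ≤ Kc i) (hd : 0 ≤ d) :
    IsLeast
      {v : ℝ | ∃ (x : Fin n → ℝ) (s : ℝ),
        (∑ i, x i) + s = d ∧ (∀ i, 0 ≤ x i ∧ x i ≤ Kc i) ∧ 0 ≤ s ∧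
        v = ∑ i, c i * x i + p * s}
      ((univ : Finset (Fin (n + 1))).sup' ⟨0, mem_univ 0⟩
        (fun istar =>
          (Fin.cases p c istar : ℝ) * d +
            ∑ i ∈ univ.filter (fun i => c i < (Fin.cases p c istar : ℝ)),
              Kc i * (c i - (Fin.cases p c istar : ℝ)))) := by
  set G := ((univ : Finset (Fin (n + 1))).sup' ⟨0, mem_univ 0⟩
        (fun istar =>
          (Fin.cases p c istar : ℝ) * d +
            ∑ i ∈ univ.filter (fun i => c i < (Fin.cases p c istar : ℝ)),
              Kc i * (c i - (Fin.cases p c istar : ℝ)))) with hG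
  have hLB : ∀ v ∈ {v : ℝ | ∃ (x : Fin n → ℝ) (s : ℝ),
        (∑ i, x i) + s = d ∧ (∀ i, 0 ≤ x i ∧ x i ≤ Kc i) ∧ 0 ≤ s ∧
        v = ∑ i, c i * x i + p * s}, G ≤ v := by
    rintro v ⟨x, s, hxs, hx, hs, rfl⟩
    rw [hG]
    apply Finset.sup'_le
    intro istar _
    induction istar using Fin.cases with
    | zero =>
      simp only [Fin.cases_zero]
      rw [← hxs]
      exact stmt18_lb c Kc p p x s le_rfl hx hs
    | succ i =>
      simp only [Fin.cases_succ]
      rw [← hxs]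
      exact stmt18_lb c Kc p (c i) x s (hp i).le hx hs
  obtain ⟨x, sl, t, hxs, hx, hsl, ht, hle⟩ :=
    stmt18_greedy c Kc p hp hK univ d hd
  have hmem : (∑ i, c i * x i + p * sl) ∈ {v : ℝ | ∃ (x : Fin n → ℝ) (s : ℝ),
        (∑ i, x i) + s = d ∧ (∀ i, 0 ≤ x i ∧ x i ≤ Kc i) ∧ 0 ≤ s ∧
        v = ∑ i, c i * x i + p * s} :=
    ⟨x, sl, hxs, fun i => hx i (mem_univ i), hsl, rfl⟩
  have htG : t * d + ∑ i ∈ univ.filter (fun i => c i < t), Kc i * (c i - t) ≤ G := by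
    rw [hG]
    rcases ht with rfl | ⟨i, _, rfl⟩
    · have := Finset.le_sup' (b := (0 : Fin (n+1)))
        (fun istar =>
          (Fin.cases t c istar : ℝ) * d +
            ∑ i ∈ univ.filter (fun i => c i < (Fin.cases t c istar : ℝ)),
              Kc i * (c i - (Fin.cases t c istar : ℝ))) (mem_univ 0)
      simp at this; exact this
    · have := Finset.le_sup' (b := i.succ)
        (fun istar =>
          (Fin.cases p c istar : ℝ) * d +
            ∑ i ∈ univ.filter (fun i => c i < (Fin.cases p c istar : ℝ)),
              Kc i * (c i - (Fin.cases p c istar : ℝ))) (mem_univ i.succ)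
      simp at this; exact this
  have heq : (∑ i, c i * x i + p * sl) = G :=
    le_antisymm (hle.trans htG) (hLB _ hmem)
  exact ⟨heq ▸ hmem, hLB⟩
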